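/- arXiv:1507.08753 — 2 statements merged into one kernel-verified Lean document; each statement's English description precedes it below -/
import Mathlib

section
/- The discriminant of the number field Q[x]/(f_5) and the discriminant of the number field Q[x]/(f_13) are coprime integers (their gcd is 1). -/
open Polynomial

open NumberField Matrix in
/-- The field discriminant divides the (integer) discriminant of any `ℚ`-basis
consisting of elements integral over `ℤ`. -/
theorem discr_dvd_of_isIntegral_basis {K : Type*} [Field K] [NumberField K]
    {ι : Type*} [Fintype ι] [DecidableEq ι] (b : Module.Basis ι ℚ K)
    (hb : ∀ i, IsIntegral ℤ (b i)) {N : ℤ}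
    (hN : Algebra.discr ℚ (⇑b) = (N : ℚ)) :
    (NumberField.discr K : ℤ) ∣ N := by
  classical
  let e : ι ≃ Module.Free.ChooseBasisIndex ℤ (𝓞 K) := b.indexEquiv (integralBasis K)
  let b' : Module.Basis ι ℚ K := (integralBasis K).reindex e.symm
  have hvec : ⇑b' ᵥ* ((b'.toMatrix ⇑b).map (algebraMap ℚ K)) = ⇑b := b'.toMatrix_map_vecMul ⇑b
  have h1 : Algebra.discr ℚ (⇑b) = (b'.toMatrix ⇑b).det ^ 2 * Algebra.discr ℚ ⇑b' := by
    conv_lhs => rw [← hvec]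
    exact Algebra.discr_of_matrix_vecMul ⇑b' (b'.toMatrix ⇑b)
  have h2 : Algebra.discr ℚ ⇑b' = (NumberField.discr K : ℚ) := by
    have hcoe : ⇑b' = ⇑(integralBasis K) ∘ ⇑(e.symm.symm) := by
      rw [Equiv.symm_symm]; exact Module.Basis.coe_reindex _ _
    rw [hcoe, Algebra.discr_reindex, ← coe_discr]
  have hP : ∀ i j, IsIntegral ℤ (b'.toMatrix ⇑b i j) := by
    intro i j
    rw [Module.Basis.toMatrix_apply]
    have : b'.repr (b j) i = (integralBasis K).repr (b j) (e i) := by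
      simp [b', Module.Basis.repr_reindex_apply]
    rw [this]
    obtain ⟨x, hbj⟩ : ∃ x : 𝓞 K, b j = algebraMap (𝓞 K) K x :=
      ⟨⟨b j, (_root_.mem_integralClosure_iff ℤ K).mpr (hb j)⟩, rfl⟩
    rw [hbj, NumberField.integralBasis_repr_apply]
    exact isIntegral_algebraMap
  have hdet : IsIntegral ℤ (b'.toMatrix ⇑b).det := IsIntegral.det hP
  obtain ⟨d, hd⟩ := IsIntegrallyClosed.isIntegral_iff.1 hdet
  refine ⟨d ^ 2, ?_⟩
  have : (N : ℚ) = ((NumberField.discr K * d ^ 2 : ℤ) : ℚ) := by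
    push_cast
    rw [← hN, h1, h2, ← hd]
    simp only [eq_intCast]
    ring
  exact_mod_cast this

/-- `f₅ = x⁴ - 2x³ + 3x² - 10x + 25`. -/
noncomputable def f5 : ℚ[X] := X ^ 4 - 2 * X ^ 3 + 3 * X ^ 2 - 10 * X + 25

/-- `f₁₃ = x⁴ + 7x³ + 35x² + 91x + 169`. -/
noncomputable def f13 : ℚ[X] := X ^ 4 + 7 * X ^ 3 + 35 * X ^ 2 + 91 * X + 169

set_option maxHeartbeats 3200000 in
theorem discr5_dvd (h5 : Irreducible f5) :
    letI : Fact (Irreducible f5) := ⟨h5⟩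
    letI : CharZero (AdjoinRoot f5) :=
      charZero_of_injective_algebraMap (algebraMap ℚ _).injective
    letI : FiniteDimensional ℚ (AdjoinRoot f5) :=
      PowerBasis.finite (AdjoinRoot.powerBasis h5.ne_zero)
    letI : NumberField (AdjoinRoot f5) := ⟨⟩
    (NumberField.discr (AdjoinRoot f5) : ℤ) ∣ 2278400 := by
  letI : Fact (Irreducible f5) := ⟨h5⟩
  letI : CharZero (AdjoinRoot f5) :=
    charZero_of_injective_algebraMap (algebraMap ℚ _).injective
  letI : FiniteDimensional ℚ (AdjoinRoot f5) :=
    PowerBasis.finite (AdjoinRoot.powerBasis h5.ne_zero)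
  letI : NumberField (AdjoinRoot f5) := ⟨⟩
  set K := AdjoinRoot f5 with hK
  set θ : K := AdjoinRoot.root f5 with hθ
  have hθ0 : aeval θ f5 = 0 := by
    have := (AdjoinRoot.aeval_eq (f := f5) f5).trans AdjoinRoot.mk_self
    rw [aeval_def] at this ⊢
    convert this using 2
    · rfl
    · exact Subsingleton.elim _ _
  have hrel : θ ^ 4 = 2 * θ ^ 3 - 3 * θ ^ 2 + 10 * θ - 25 := by
    simp only [f5] at hθ0
    simp only [map_add, map_sub, _root_.map_mul, map_pow, aeval_X, map_ofNat] at hθ0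
    linear_combination hθ0
  have hdim : (AdjoinRoot.powerBasis h5.ne_zero).dim = 4 := by
    show f5.natDegree = 4
    simp only [f5]
    compute_degree!
  set b : Module.Basis (Fin 4) ℚ K :=
    (AdjoinRoot.powerBasis h5.ne_zero).basis.reindex (finCongr hdim) with hbdef
  have hb : ∀ i : Fin 4, b i = θ ^ (i : ℕ) := by
    intro i
    rw [hbdef, Module.Basis.reindex_apply, PowerBasis.coe_basis]
    simp [AdjoinRoot.powerBasis_gen, hθ]
  set Cm : Matrix (Fin 4) (Fin 4) ℚ := !![0,0,0,-25; 1,0,0,10; 0,1,0,-3; 0,0,1,2] with hCm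
  have hM : Algebra.leftMulMatrix b θ = Cm := by
    ext i j
    rw [Algebra.leftMulMatrix_eq_repr_mul]
    fin_cases j
    · have h : θ * b ⟨0, by norm_num⟩ = b 1 := by
        rw [hb, hb]; show θ * θ ^ (0:ℕ) = θ ^ (1:ℕ); ring
      rw [h, Module.Basis.repr_self]
      fin_cases i <;>
        simp [hCm, Finsupp.single_apply, Matrix.vecHead, Matrix.vecTail]
    · have h : θ * b ⟨1, by norm_num⟩ = b 2 := by
        rw [hb, hb]; show θ * θ ^ (1:ℕ) = θ ^ (2:ℕ); ring
      rw [h, Module.Basis.repr_self]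
      fin_cases i <;>
        simp [hCm, Finsupp.single_apply, Matrix.vecHead, Matrix.vecTail]
    · have h : θ * b ⟨2, by norm_num⟩ = b 3 := by
        rw [hb, hb]; show θ * θ ^ (2:ℕ) = θ ^ (3:ℕ); ring
      rw [h, Module.Basis.repr_self]
      fin_cases i <;>
        simp [hCm, Finsupp.single_apply, Matrix.vecHead, Matrix.vecTail]
    · have h : θ * b ⟨3, by norm_num⟩ =
          (2:ℚ) • b 3 - (3:ℚ) • b 2 + (10:ℚ) • b 1 - (25:ℚ) • b 0 := by
        simp only [hb, Algebra.smul_def, map_ofNat]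
        show θ * θ ^ (3:ℕ) = (2:K) * θ ^ (3:ℕ) - (3:K) * θ ^ (2:ℕ) +
          (10:K) * θ ^ (1:ℕ) - (25:K) * θ ^ (0:ℕ)
        linear_combination hrel
      rw [h]
      simp only [map_sub, map_add, _root_.map_smul, Module.Basis.repr_self]
      fin_cases i <;> simp [hCm, Finsupp.single_apply, Matrix.vecHead, Matrix.vecTail]
  have htr : ∀ k : ℕ, Algebra.trace ℚ K (θ ^ k) = Matrix.trace (Cm ^ k) := by
    intro k
    rw [Algebra.trace_eq_matrix_trace b, map_pow, hM]
  have ht0 : Matrix.trace (1 : Matrix (Fin 4) (Fin 4) ℚ) = 4 := by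
    norm_num [Matrix.trace, Matrix.diag, Fin.sum_univ_four]
  have ht1 : Matrix.trace Cm = 2 := by
    norm_num [hCm, Matrix.trace, Matrix.diag, Fin.sum_univ_four, Matrix.cons_val_two, Matrix.cons_val_three]
  have ht2 : Matrix.trace (Cm ^ 2) = -2 := by
    norm_num [hCm, pow_succ, Matrix.trace, Matrix.diag, Fin.sum_univ_four,
      Matrix.mul_apply, Matrix.one_apply, Matrix.vecHead, Matrix.vecTail, Matrix.cons_val_two, Matrix.cons_val_three]
  have ht3 : Matrix.trace (Cm ^ 3) = 20 := by
    norm_num [hCm, pow_succ, Matrix.trace, Matrix.diag, Fin.sum_univ_four,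
      Matrix.mul_apply, Matrix.one_apply, Matrix.vecHead, Matrix.vecTail, Matrix.cons_val_two, Matrix.cons_val_three]
  have ht4 : Matrix.trace (Cm ^ 4) = -34 := by
    norm_num [hCm, pow_succ, Matrix.trace, Matrix.diag, Fin.sum_univ_four,
      Matrix.mul_apply, Matrix.one_apply, Matrix.vecHead, Matrix.vecTail, Matrix.cons_val_two, Matrix.cons_val_three]
  have ht5 : Matrix.trace (Cm ^ 5) = -198 := by
    norm_num [hCm, pow_succ, Matrix.trace, Matrix.diag, Fin.sum_univ_four,
      Matrix.mul_apply, Matrix.one_apply, Matrix.vecHead, Matrix.vecTail, Matrix.cons_val_two, Matrix.cons_val_three]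
  have ht6 : Matrix.trace (Cm ^ 6) = -44 := by
    norm_num [hCm, pow_succ, Matrix.trace, Matrix.diag, Fin.sum_univ_four,
      Matrix.mul_apply, Matrix.one_apply, Matrix.vecHead, Matrix.vecTail, Matrix.cons_val_two, Matrix.cons_val_three]
  have hT : Algebra.traceMatrix ℚ ⇑b =
      !![4,2,-2,20; 2,-2,20,-34; -2,20,-34,-198; 20,-34,-198,-44] := by
    ext i j
    rw [Algebra.traceMatrix_apply, Algebra.traceForm_apply, hb, hb, ← pow_add, htr]
    fin_cases i <;> fin_cases j <;>
      norm_num [ht0, ht1, ht2, ht3, ht4, ht5, ht6]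
  have hdiscr : Algebra.discr ℚ ⇑b = ((2278400 : ℤ) : ℚ) := by
    rw [Algebra.discr_def, hT]
    simp [Matrix.det_succ_row_zero, Fin.sum_univ_succ, Fin.succAbove]
    norm_num
  have hint : IsIntegral ℤ θ := by
    refine ⟨X ^ 4 - 2 * X ^ 3 + 3 * X ^ 2 - 10 * X + 25, ?_, ?_⟩
    · monicity!
    · have hmap : (X ^ 4 - 2 * X ^ 3 + 3 * X ^ 2 - 10 * X + 25 : ℤ[X]).map
          (algebraMap ℤ ℚ) = f5 := by
        simp [f5, Polynomial.map_add, Polynomial.map_sub, Polynomial.map_mul,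
          Polynomial.map_pow, Polynomial.map_ofNat]
      rw [← Polynomial.aeval_def, ← Polynomial.aeval_map_algebraMap ℚ, hmap, hθ0]
  have hbint : ∀ i : Fin 4, IsIntegral ℤ (b i) := by
    intro i; rw [hb]; exact hint.pow _
  exact discr_dvd_of_isIntegral_basis b hbint hdiscr

set_option maxHeartbeats 3200000 in
theorem discr13_dvd (h13 : Irreducible f13) :
    letI : Fact (Irreducible f13) := ⟨h13⟩
    letI : CharZero (AdjoinRoot f13) :=
      charZero_of_injective_algebraMap (algebraMap ℚ _).injective
    letI : FiniteDimensional ℚ (AdjoinRoot f13) :=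
      PowerBasis.finite (AdjoinRoot.powerBasis h13.ne_zero)
    letI : NumberField (AdjoinRoot f13) := ⟨⟩
    (NumberField.discr (AdjoinRoot f13) : ℤ) ∣ 33502053 := by
  letI : Fact (Irreducible f13) := ⟨h13⟩
  letI : CharZero (AdjoinRoot f13) :=
    charZero_of_injective_algebraMap (algebraMap ℚ _).injective
  letI : FiniteDimensional ℚ (AdjoinRoot f13) :=
    PowerBasis.finite (AdjoinRoot.powerBasis h13.ne_zero)
  letI : NumberField (AdjoinRoot f13) := ⟨⟩
  set K := AdjoinRoot f13 with hK
  set θ : K := AdjoinRoot.root f13 with hθ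
  have hθ0 : aeval θ f13 = 0 := by
    have := (AdjoinRoot.aeval_eq (f := f13) f13).trans AdjoinRoot.mk_self
    rw [aeval_def] at this ⊢
    convert this using 2
    · rfl
    · exact Subsingleton.elim _ _
  have hrel : θ ^ 4 = -7 * θ ^ 3 - 35 * θ ^ 2 - 91 * θ - 169 := by
    simp only [f13] at hθ0
    simp only [map_add, map_sub, _root_.map_mul, map_pow, aeval_X, map_ofNat] at hθ0
    linear_combination hθ0
  have hdim : (AdjoinRoot.powerBasis h13.ne_zero).dim = 4 := by
    show f13.natDegree = 4
    simp only [f13]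
    compute_degree!
  set b : Module.Basis (Fin 4) ℚ K :=
    (AdjoinRoot.powerBasis h13.ne_zero).basis.reindex (finCongr hdim) with hbdef
  have hb : ∀ i : Fin 4, b i = θ ^ (i : ℕ) := by
    intro i
    rw [hbdef, Module.Basis.reindex_apply, PowerBasis.coe_basis]
    simp [AdjoinRoot.powerBasis_gen, hθ]
  set Cm : Matrix (Fin 4) (Fin 4) ℚ :=
    !![0,0,0,-169; 1,0,0,-91; 0,1,0,-35; 0,0,1,-7] with hCm
  have hM : Algebra.leftMulMatrix b θ = Cm := by
    ext i j
    rw [Algebra.leftMulMatrix_eq_repr_mul]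
    fin_cases j
    · have h : θ * b ⟨0, by norm_num⟩ = b 1 := by
        rw [hb, hb]; show θ * θ ^ (0:ℕ) = θ ^ (1:ℕ); ring
      rw [h, Module.Basis.repr_self]
      fin_cases i <;>
        simp [hCm, Finsupp.single_apply, Matrix.vecHead, Matrix.vecTail]
    · have h : θ * b ⟨1, by norm_num⟩ = b 2 := by
        rw [hb, hb]; show θ * θ ^ (1:ℕ) = θ ^ (2:ℕ); ring
      rw [h, Module.Basis.repr_self]
      fin_cases i <;>
        simp [hCm, Finsupp.single_apply, Matrix.vecHead, Matrix.vecTail]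
    · have h : θ * b ⟨2, by norm_num⟩ = b 3 := by
        rw [hb, hb]; show θ * θ ^ (2:ℕ) = θ ^ (3:ℕ); ring
      rw [h, Module.Basis.repr_self]
      fin_cases i <;>
        simp [hCm, Finsupp.single_apply, Matrix.vecHead, Matrix.vecTail]
    · have h : θ * b ⟨3, by norm_num⟩ =
          (-7:ℚ) • b 3 - (35:ℚ) • b 2 - (91:ℚ) • b 1 - (169:ℚ) • b 0 := by
        simp only [hb, Algebra.smul_def, map_neg, map_ofNat]
        show θ * θ ^ (3:ℕ) = -(7:K) * θ ^ (3:ℕ) - (35:K) * θ ^ (2:ℕ) -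
          (91:K) * θ ^ (1:ℕ) - (169:K) * θ ^ (0:ℕ)
        linear_combination hrel
      rw [h]
      simp only [map_sub, map_add, _root_.map_smul, Module.Basis.repr_self]
      fin_cases i <;> simp [hCm, Finsupp.single_apply, Matrix.vecHead, Matrix.vecTail]
  have htr : ∀ k : ℕ, Algebra.trace ℚ K (θ ^ k) = Matrix.trace (Cm ^ k) := by
    intro k
    rw [Algebra.trace_eq_matrix_trace b, map_pow, hM]
  have ht0 : Matrix.trace (1 : Matrix (Fin 4) (Fin 4) ℚ) = 4 := by
    norm_num [Matrix.trace, Matrix.diag, Fin.sum_univ_four]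
  have ht1 : Matrix.trace Cm = -7 := by
    norm_num [hCm, Matrix.trace, Matrix.diag, Fin.sum_univ_four, Matrix.cons_val_two, Matrix.cons_val_three]
  have ht2 : Matrix.trace (Cm ^ 2) = -21 := by
    norm_num [hCm, pow_succ, Matrix.trace, Matrix.diag, Fin.sum_univ_four,
      Matrix.mul_apply, Matrix.one_apply, Matrix.vecHead, Matrix.vecTail, Matrix.cons_val_two, Matrix.cons_val_three]
  have ht3 : Matrix.trace (Cm ^ 3) = 119 := by
    norm_num [hCm, pow_succ, Matrix.trace, Matrix.diag, Fin.sum_univ_four,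
      Matrix.mul_apply, Matrix.one_apply, Matrix.vecHead, Matrix.vecTail, Matrix.cons_val_two, Matrix.cons_val_three]
  have ht4 : Matrix.trace (Cm ^ 4) = -137 := by
    norm_num [hCm, pow_succ, Matrix.trace, Matrix.diag, Fin.sum_univ_four,
      Matrix.mul_apply, Matrix.one_apply, Matrix.vecHead, Matrix.vecTail, Matrix.cons_val_two, Matrix.cons_val_three]
  have ht5 : Matrix.trace (Cm ^ 5) = -112 := by
    norm_num [hCm, pow_succ, Matrix.trace, Matrix.diag, Fin.sum_univ_four,
      Matrix.mul_apply, Matrix.one_apply, Matrix.vecHead, Matrix.vecTail, Matrix.cons_val_two, Matrix.cons_val_three]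
  have ht6 : Matrix.trace (Cm ^ 6) = -1701 := by
    norm_num [hCm, pow_succ, Matrix.trace, Matrix.diag, Fin.sum_univ_four,
      Matrix.mul_apply, Matrix.one_apply, Matrix.vecHead, Matrix.vecTail, Matrix.cons_val_two, Matrix.cons_val_three]
  have hT : Algebra.traceMatrix ℚ ⇑b =
      !![4,-7,-21,119; -7,-21,119,-137; -21,119,-137,-112; 119,-137,-112,-1701] := by
    ext i j
    rw [Algebra.traceMatrix_apply, Algebra.traceForm_apply, hb, hb, ← pow_add, htr]
    fin_cases i <;> fin_cases j <;>
      norm_num [ht0, ht1, ht2, ht3, ht4, ht5, ht6]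
  have hdiscr : Algebra.discr ℚ ⇑b = ((33502053 : ℤ) : ℚ) := by
    rw [Algebra.discr_def, hT]
    simp [Matrix.det_succ_row_zero, Fin.sum_univ_succ, Fin.succAbove]
    norm_num
  have hint : IsIntegral ℤ θ := by
    refine ⟨X ^ 4 + 7 * X ^ 3 + 35 * X ^ 2 + 91 * X + 169, ?_, ?_⟩
    · monicity!
    · have hmap : (X ^ 4 + 7 * X ^ 3 + 35 * X ^ 2 + 91 * X + 169 : ℤ[X]).map
          (algebraMap ℤ ℚ) = f13 := by
        simp [f13, Polynomial.map_add, Polynomial.map_mul,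
          Polynomial.map_pow, Polynomial.map_ofNat]
      rw [← Polynomial.aeval_def, ← Polynomial.aeval_map_algebraMap ℚ, hmap, hθ0]
  have hbint : ∀ i : Fin 4, IsIntegral ℤ (b i) := by
    intro i; rw [hb]; exact hint.pow _
  exact discr_dvd_of_isIntegral_basis b hbint hdiscr

/-- The discriminants of the number fields `ℚ[x]/(f₅)` and `ℚ[x]/(f₁₃)` are coprime
integers: their gcd is `1`. -/
theorem discr_coprime (h5 : Irreducible f5) (h13 : Irreducible f13) :
    letI : Fact (Irreducible f5) := ⟨h5⟩
    letI : Fact (Irreducible f13) := ⟨h13⟩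
    letI : CharZero (AdjoinRoot f5) :=
      charZero_of_injective_algebraMap (algebraMap ℚ _).injective
    letI : CharZero (AdjoinRoot f13) :=
      charZero_of_injective_algebraMap (algebraMap ℚ _).injective
    letI : FiniteDimensional ℚ (AdjoinRoot f5) :=
      PowerBasis.finite (AdjoinRoot.powerBasis h5.ne_zero)
    letI : FiniteDimensional ℚ (AdjoinRoot f13) :=
      PowerBasis.finite (AdjoinRoot.powerBasis h13.ne_zero)
    letI : NumberField (AdjoinRoot f5) := ⟨⟩
    letI : NumberField (AdjoinRoot f13) := ⟨⟩
    Int.gcd (NumberField.discr (AdjoinRoot f5)) (NumberField.discr (AdjoinRoot f13)) = 1 := by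
  letI : Fact (Irreducible f5) := ⟨h5⟩
  letI : Fact (Irreducible f13) := ⟨h13⟩
  letI : CharZero (AdjoinRoot f5) :=
    charZero_of_injective_algebraMap (algebraMap ℚ _).injective
  letI : CharZero (AdjoinRoot f13) :=
    charZero_of_injective_algebraMap (algebraMap ℚ _).injective
  letI : FiniteDimensional ℚ (AdjoinRoot f5) :=
    PowerBasis.finite (AdjoinRoot.powerBasis h5.ne_zero)
  letI : FiniteDimensional ℚ (AdjoinRoot f13) :=
    PowerBasis.finite (AdjoinRoot.powerBasis h13.ne_zero)
  letI : NumberField (AdjoinRoot f5) := ⟨⟩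
  letI : NumberField (AdjoinRoot f13) := ⟨⟩
  have d5 : (NumberField.discr (AdjoinRoot f5) : ℤ) ∣ 2278400 := discr5_dvd h5
  have d13 : (NumberField.discr (AdjoinRoot f13) : ℤ) ∣ 33502053 := discr13_dvd h13
  show Int.gcd (NumberField.discr (AdjoinRoot f5)) (NumberField.discr (AdjoinRoot f13)) = 1
  have hg : ((Int.gcd (NumberField.discr (AdjoinRoot f5))
        (NumberField.discr (AdjoinRoot f13)) : ℤ)) ∣
      ((Int.gcd (2278400 : ℤ) (33502053 : ℤ) : ℤ)) :=
    Int.dvd_coe_gcd (dvd_trans (Int.gcd_dvd_left _ _) d5) (dvd_trans (Int.gcd_dvd_right _ _) d13)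
  have hone : Int.gcd (2278400 : ℤ) (33502053 : ℤ) = 1 := by norm_num
  rw [hone] at hg
  exact Nat.dvd_one.mp (by exact_mod_cast hg)
end

section
/- If K is a number field (a field of finite dimension over Q) that admits a Q-algebra homomorphism into Q[x]/(f_5) and also a Q-algebra homomorphism into Q[x]/(f_13), then K = Q, i.e. the dimension of K over Q is 1. -/
open Polynomial

lemma f5_monic : f5.Monic := by unfold f5; monicity!

lemma f13_monic : f13.Monic := by unfold f13; monicity!

lemma f5_natDegree : f5.natDegree = 4 := by unfold f5; compute_degree!

lemma f13_natDegree : f13.natDegree = 4 := by unfold f13; compute_degree!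

lemma f5_degree : f5.degree = 4 := by unfold f5; compute_degree!

lemma f13_degree : f13.degree = 4 := by unfold f13; compute_degree!

/-- Master irrationality lemma: if `padicValNat p n` is odd then `n` is not a square
times a rational square ratio. -/
lemma not_rat_sq (p n : ℕ) [hp : Fact p.Prime] (hodd : Odd (padicValNat p n))
    (hn : n ≠ 0) {q r : ℚ} (hr : r ≠ 0) : q ^ 2 ≠ (n : ℚ) * r ^ 2 := by
  intro h
  have hn' : (n : ℚ) ≠ 0 := by exact_mod_cast hn
  have hq : q ≠ 0 := by
    rintro rfl
    exact (mul_ne_zero hn' (pow_ne_zero _ hr)) (by rw [← h]; norm_num)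
  have h1 := congrArg (padicValRat p) h
  rw [show q ^ 2 = q * q by ring, padicValRat.mul hq hq,
      padicValRat.mul hn' (pow_ne_zero _ hr),
      show r ^ 2 = r * r by ring, padicValRat.mul hr hr,
      padicValRat.of_nat] at h1
  obtain ⟨k, hk⟩ := hodd
  rw [hk] at h1
  push_cast at h1
  omega

lemma sq_ne_two' {q r : ℚ} (hr : r ≠ 0) : q ^ 2 ≠ 2 * r ^ 2 := by
  have h := not_rat_sq 2 2 (by rw [padicValNat.self one_lt_two]; exact odd_one) (by norm_num) hr
    (q := q)
  simpa using h

lemma sq_ne_13' {q r : ℚ} (hr : r ≠ 0) : q ^ 2 ≠ 13 * r ^ 2 := by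
  haveI : Fact (Nat.Prime 13) := ⟨by norm_num⟩
  have h := not_rat_sq 13 13 (by rw [padicValNat.self (by norm_num)]; exact odd_one)
    (by norm_num) hr (q := q)
  simpa using h

lemma sq_ne_26' {q r : ℚ} (hr : r ≠ 0) : q ^ 2 ≠ 26 * r ^ 2 := by
  have hv : padicValNat 2 26 = 1 := by
    rw [show (26 : ℕ) = 2 * 13 by norm_num,
      padicValNat.mul (by norm_num) (by norm_num),
      padicValNat.self one_lt_two, padicValNat.eq_zero_of_not_dvd (by norm_num)]
  have h := not_rat_sq 2 26 (by rw [hv]; exact odd_one) (by norm_num) hr (q := q)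
  simpa using h

lemma sq_ne_89' {q r : ℚ} (hr : r ≠ 0) : q ^ 2 ≠ 89 * r ^ 2 := by
  haveI : Fact (Nat.Prime 89) := ⟨by norm_num⟩
  have h := not_rat_sq 89 89 (by rw [padicValNat.self (by norm_num)]; exact odd_one)
    (by norm_num) hr (q := q)
  simpa using h

lemma sq_ne_4692' {q r : ℚ} (hr : r ≠ 0) : q ^ 2 ≠ 4692 * r ^ 2 := by
  haveI : Fact (Nat.Prime 3) := ⟨by norm_num⟩
  have hv : padicValNat 3 4692 = 1 := by
    rw [show (4692 : ℕ) = 3 * 1564 by norm_num,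
      padicValNat.mul (by norm_num) (by norm_num),
      padicValNat.self (by norm_num), padicValNat.eq_zero_of_not_dvd (by norm_num)]
  have h := not_rat_sq 3 4692 (by rw [hv]; exact odd_one) (by norm_num) hr (q := q)
  simpa using h

/-- Splitting lemma: a zero product in `ℚ(√m)` written in coordinates. -/
lemma quad_split {m : ℚ} (hm : ∀ q r : ℚ, r ≠ 0 → q ^ 2 ≠ m * r ^ 2)
    {r1 r2 s1 s2 : ℚ} (h1 : r1 * s1 + m * (r2 * s2) = 0)
    (h2 : r1 * s2 + r2 * s1 = 0) :
    (r1 = 0 ∧ r2 = 0) ∨ (s1 = 0 ∧ s2 = 0) := by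
  by_cases hs : s1 = 0 ∧ s2 = 0
  · exact Or.inr hs
  · left
    have hk : r1 ^ 2 = m * r2 ^ 2 := by
      rcases not_and_or.mp hs with h | h
      · have key : (r1 ^ 2 - m * r2 ^ 2) * s1 = 0 := by
          linear_combination r1 * h1 - m * r2 * h2
        rcases mul_eq_zero.mp key with h' | h'
        · linarith
        · exact absurd h' h
      · have key : (r1 ^ 2 - m * r2 ^ 2) * s2 = 0 := by
          linear_combination r1 * h2 - r2 * h1
        rcases mul_eq_zero.mp key with h' | h'
        · linarith
        · exact absurd h' h
    rcases eq_or_ne r2 0 with h | h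
    · refine ⟨?_, h⟩
      have : r1 ^ 2 = 0 := by rw [hk, h]; ring
      exact pow_eq_zero_iff two_ne_zero |>.mp this
    · exact absurd hk (hm r1 r2 h)

/-- Every element of `AdjoinRoot f` (with `f` monic of degree 4) is represented by a cubic. -/
lemma adjoinRoot_repr {f : ℚ[X]} (hm : f.Monic) (hd : f.natDegree = 4)
    (y : AdjoinRoot f) :
    ∃ a b c d : ℚ,
      y = AdjoinRoot.mk f (C a + C b * X + C c * X ^ 2 + C d * X ^ 3) := by
  obtain ⟨P, rfl⟩ := AdjoinRoot.mk_surjective y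
  refine ⟨(P %ₘ f).coeff 0, (P %ₘ f).coeff 1, (P %ₘ f).coeff 2, (P %ₘ f).coeff 3, ?_⟩
  have h1 : AdjoinRoot.mk f P = AdjoinRoot.mk f (P %ₘ f) := by
    conv_lhs => rw [← P.modByMonic_add_div f]
    simp
  rw [h1]
  congr 1
  have hne : f ≠ 1 := by
    intro h; rw [h] at hd; simp at hd
  have hdeg : (P %ₘ f).natDegree < 4 := by
    have := P.natDegree_modByMonic_lt hm hne
    omega
  conv_lhs => rw [(P %ₘ f).as_sum_range' 4 hdeg]
  simp only [Finset.sum_range_succ, Finset.sum_range_zero, zero_add,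
    ← C_mul_X_pow_eq_monomial, pow_zero, mul_one, pow_one]

/-- The scalar consequence of `y² ∈ ℚ` in `K₅`. -/
lemma scalar5 (a b c d t : ℚ)
    (he1 : 2*a*b + 20*b*d + 10*c^2 - 10*c*d - 40*d^2 = 0)
    (he2 : 2*a*c + b^2 - 6*b*d - 3*c^2 + 8*c*d - 8*d^2 = 0)
    (he3 : 2*a*d + 2*b*c + 4*b*d + 2*c^2 + 2*c*d + 6*d^2 = 0)
    (he0 : a^2 - 50*b*d - 25*c^2 - 100*c*d - 25*d^2 = t) :
    (∃ s : ℚ, t = s ^ 2) ∨ ∃ s : ℚ, t = 2 * s ^ 2 := by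
  have tail : b + c + 4*d = 0 → -2*c - 4*d = 0 →
      (∃ s : ℚ, t = s ^ 2) ∨ ∃ s : ℚ, t = 2 * s ^ 2 := by
    intro hs1 hs2
    have hc : c = -2*d := by linarith
    have hb : b = -2*d := by linarith
    subst hc; subst hb
    have hd : d * (a + 5*d) = 0 := by linear_combination he3 / 2
    rcases mul_eq_zero.mp hd with h | h
    · subst h
      exact Or.inl ⟨a, by linear_combination -he0⟩
    · exact Or.inr ⟨10*d, by linear_combination -he0 + (a - 5*d) * h⟩
  have hq1 : (2*a + b - c + 10*d) * (b + c + 4*d)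
      + 2 * ((-2*b - 4*c + 8*d) * (-2*c - 4*d)) = 0 := by
    linear_combination he1 + he2 + 4*he3
  have hq2 : (2*a + b - c + 10*d) * (-2*c - 4*d)
      + (-2*b - 4*c + 8*d) * (b + c + 4*d) = 0 := by
    linear_combination (-2)*he2 + (-4)*he3
  rcases quad_split (fun q r hr => sq_ne_two' hr) hq1 hq2 with ⟨hr1, hr2⟩ | ⟨hs1, hs2⟩
  · have h34 : 2*(b + c + 4*d)^2 + 11*((b + c + 4*d)*(-2*c - 4*d))
        + 4*(-2*c - 4*d)^2 = 0 := by
      linear_combination (-20)*he3 + (2*(10*d))*hr1 + (4*(-2*c - 4*d) - (b + c + 4*d))*hr2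
    have hs2 : -2*c - 4*d = 0 := by
      by_contra hne
      exact sq_ne_89' hne
        (show (4*(b + c + 4*d) + 11*(-2*c - 4*d))^2 = 89*(-2*c - 4*d)^2 by
          linear_combination 8*h34)
    have hs1 : b + c + 4*d = 0 := by
      have h' : (b + c + 4*d)^2 = 0 := by
        linear_combination h34/2 + (-(11/2)*(b + c + 4*d) - 2*(-2*c - 4*d))*hs2
      exact pow_eq_zero_iff two_ne_zero |>.mp h'
    exact tail hs1 hs2
  · exact tail hs1 hs2

/-- The scalar consequence of `y² ∈ ℚ` in `K₁₃`. -/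
lemma scalar13 (a b c d t : ℚ)
    (he1 : 2*a*b - 182*b*d - 91*c^2 + 936*c*d - 91*d^2 = 0)
    (he2 : 2*a*c + b^2 - 70*b*d - 35*c^2 + 308*c*d - 22*d^2 = 0)
    (he3 : 2*a*d + 2*b*c - 14*b*d - 7*c^2 + 28*c*d + 56*d^2 = 0)
    (he0 : a^2 - 338*b*d - 169*c^2 + 2366*c*d - 2366*d^2 = t) :
    (∃ s : ℚ, t = s ^ 2) ∨ ∃ s : ℚ, t = 13 * s ^ 2 := by
  have tail : 2*b - 7*c + 5*d = 0 → -c + 7*d = 0 →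
      (∃ s : ℚ, t = s ^ 2) ∨ ∃ s : ℚ, t = 13 * s ^ 2 := by
    intro hs1 hs2
    have hc : c = 7*d := by linarith
    have hb : b = 22*d := by linarith
    subst hc; subst hb
    have hd : d * (2*a - 91*d) = 0 := by linear_combination he3
    rcases mul_eq_zero.mp hd with h | h
    · subst h
      exact Or.inl ⟨a, by linear_combination -he0⟩
    · exact Or.inr ⟨13*d/2, by linear_combination -he0 + ((1/2)*a + (91/4)*d) * h⟩
  have hq1 : (4*a - 7*b - 21*c + 119*d) * (2*b - 7*c + 5*d)
      + 13 * ((-b + 7*c - d) * (-c + 7*d)) = 0 := by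
    linear_combination 4*he1 - 14*he2 + 10*he3
  have hq2 : (4*a - 7*b - 21*c + 119*d) * (-c + 7*d)
      + (-b + 7*c - d) * (2*b - 7*c + 5*d) = 0 := by
    linear_combination (-2)*he2 + 14*he3
  rcases quad_split (fun q r hr => sq_ne_13' hr) hq1 hq2 with ⟨hr1, hr2⟩ | ⟨hs1, hs2⟩
  · have h34 : 7*(2*b - 7*c + 5*d)^2 - 146*((2*b - 7*c + 5*d)*(-c + 7*d))
        + 91*(-c + 7*d)^2 = 0 := by
      linear_combination (-8)*he1 + 56*he2 + (-8)*he3 + (4*b - 28*c + 4*d)*hr1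
    have hs2 : -c + 7*d = 0 := by
      by_contra hne
      exact sq_ne_4692' hne
        (show (7*(2*b - 7*c + 5*d) - 73*(-c + 7*d))^2 = 4692*(-c + 7*d)^2 by
          linear_combination 7*h34)
    have hs1 : 2*b - 7*c + 5*d = 0 := by
      have h' : (2*b - 7*c + 5*d)^2 = 0 := by
        linear_combination h34/7 + ((146/7)*(2*b - 7*c + 5*d) - 13*(-c + 7*d))*hs2
      exact pow_eq_zero_iff two_ne_zero |>.mp h'
    exact tail hs1 hs2
  · exact tail hs1 hs2

/-- If `y ∈ K₅` has rational square `t`, then `t` is a square or twice a square. -/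
lemma sq5 (y : AdjoinRoot f5) (t : ℚ) (h : y ^ 2 = algebraMap ℚ (AdjoinRoot f5) t) :
    (∃ s : ℚ, t = s ^ 2) ∨ ∃ s : ℚ, t = 2 * s ^ 2 := by
  obtain ⟨a, b, c, d, rfl⟩ := adjoinRoot_repr f5_monic f5_natDegree y
  have halg : algebraMap ℚ (AdjoinRoot f5) t = AdjoinRoot.mk f5 (C t) := rfl
  rw [halg, ← map_pow] at h
  have hdvd : f5 ∣ (C a + C b * X + C c * X ^ 2 + C d * X ^ 3) ^ 2 - C t := by
    rw [← AdjoinRoot.mk_eq_zero, map_sub, sub_eq_zero]; exact h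
  have hfac : (C a + C b * X + C c * X ^ 2 + C d * X ^ 3) ^ 2 - C t =
      f5 * (C (d^2 + 4*c*d + c^2 + 2*b*d) + C (2*d^2 + 2*c*d) * X + C (d^2) * X ^ 2)
      + (C (a^2 - 50*b*d - 25*c^2 - 100*c*d - 25*d^2 - t)
        + C (2*a*b + 20*b*d + 10*c^2 - 10*c*d - 40*d^2) * X
        + C (2*a*c + b^2 - 6*b*d - 3*c^2 + 8*c*d - 8*d^2) * X ^ 2
        + C (2*a*d + 2*b*c + 4*b*d + 2*c^2 + 2*c*d + 6*d^2) * X ^ 3) := by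
    simp only [map_add, map_sub, map_neg, map_mul, map_pow, map_ofNat]
    unfold f5; ring
  have hdvd2 : f5 ∣ (C (a^2 - 50*b*d - 25*c^2 - 100*c*d - 25*d^2 - t)
      + C (2*a*b + 20*b*d + 10*c^2 - 10*c*d - 40*d^2) * X
      + C (2*a*c + b^2 - 6*b*d - 3*c^2 + 8*c*d - 8*d^2) * X ^ 2
      + C (2*a*d + 2*b*c + 4*b*d + 2*c^2 + 2*c*d + 6*d^2) * X ^ 3) := by
    rw [hfac] at hdvd
    exact (dvd_add_right (dvd_mul_right f5 _)).mp hdvd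
  have hdeg : (C (a^2 - 50*b*d - 25*c^2 - 100*c*d - 25*d^2 - t)
      + C (2*a*b + 20*b*d + 10*c^2 - 10*c*d - 40*d^2) * X
      + C (2*a*c + b^2 - 6*b*d - 3*c^2 + 8*c*d - 8*d^2) * X ^ 2
      + C (2*a*d + 2*b*c + 4*b*d + 2*c^2 + 2*c*d + 6*d^2) * X ^ 3).degree < f5.degree := by
    rw [f5_degree]
    apply lt_of_le_of_lt (b := (3 : WithBot ℕ))
    · compute_degree
    · decide
  have hG := Polynomial.eq_zero_of_dvd_of_degree_lt hdvd2 hdeg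
  have he0 := congrArg (fun p => coeff p 0) hG
  have he1 := congrArg (fun p => coeff p 1) hG
  have he2 := congrArg (fun p => coeff p 2) hG
  have he3 := congrArg (fun p => coeff p 3) hG
  simp only [coeff_add, coeff_C_mul, coeff_C, coeff_X_pow, coeff_X, coeff_zero] at he0 he1 he2 he3
  norm_num at he0 he1 he2 he3
  exact scalar5 a b c d t (by linear_combination he1) (by linear_combination he2)
    (by linear_combination he3) (by linear_combination he0)

/-- If `y ∈ K₁₃` has rational square `t`, then `t` is a square or 13 times a square. -/
lemma sq13 (y : AdjoinRoot f13) (t : ℚ) (h : y ^ 2 = algebraMap ℚ (AdjoinRoot f13) t) :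
    (∃ s : ℚ, t = s ^ 2) ∨ ∃ s : ℚ, t = 13 * s ^ 2 := by
  obtain ⟨a, b, c, d, rfl⟩ := adjoinRoot_repr f13_monic f13_natDegree y
  have halg : algebraMap ℚ (AdjoinRoot f13) t = AdjoinRoot.mk f13 (C t) := rfl
  rw [halg, ← map_pow] at h
  have hdvd : f13 ∣ (C a + C b * X + C c * X ^ 2 + C d * X ^ 3) ^ 2 - C t := by
    rw [← AdjoinRoot.mk_eq_zero, map_sub, sub_eq_zero]; exact h
  have hfac : (C a + C b * X + C c * X ^ 2 + C d * X ^ 3) ^ 2 - C t =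
      f13 * (C (14*d^2 - 14*c*d + c^2 + 2*b*d) + C (-7*d^2 + 2*c*d) * X + C (d^2) * X ^ 2)
      + (C (a^2 - 338*b*d - 169*c^2 + 2366*c*d - 2366*d^2 - t)
        + C (2*a*b - 182*b*d - 91*c^2 + 936*c*d - 91*d^2) * X
        + C (2*a*c + b^2 - 70*b*d - 35*c^2 + 308*c*d - 22*d^2) * X ^ 2
        + C (2*a*d + 2*b*c - 14*b*d - 7*c^2 + 28*c*d + 56*d^2) * X ^ 3) := by
    simp only [map_add, map_sub, map_neg, map_mul, map_pow, map_ofNat]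
    unfold f13; ring
  have hdvd2 : f13 ∣ (C (a^2 - 338*b*d - 169*c^2 + 2366*c*d - 2366*d^2 - t)
      + C (2*a*b - 182*b*d - 91*c^2 + 936*c*d - 91*d^2) * X
      + C (2*a*c + b^2 - 70*b*d - 35*c^2 + 308*c*d - 22*d^2) * X ^ 2
      + C (2*a*d + 2*b*c - 14*b*d - 7*c^2 + 28*c*d + 56*d^2) * X ^ 3) := by
    rw [hfac] at hdvd
    exact (dvd_add_right (dvd_mul_right f13 _)).mp hdvd
  have hdeg : (C (a^2 - 338*b*d - 169*c^2 + 2366*c*d - 2366*d^2 - t)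
      + C (2*a*b - 182*b*d - 91*c^2 + 936*c*d - 91*d^2) * X
      + C (2*a*c + b^2 - 70*b*d - 35*c^2 + 308*c*d - 22*d^2) * X ^ 2
      + C (2*a*d + 2*b*c - 14*b*d - 7*c^2 + 28*c*d + 56*d^2) * X ^ 3).degree < f13.degree := by
    rw [f13_degree]
    apply lt_of_le_of_lt (b := (3 : WithBot ℕ))
    · compute_degree
    · decide
  have hG := Polynomial.eq_zero_of_dvd_of_degree_lt hdvd2 hdeg
  have he0 := congrArg (fun p => coeff p 0) hG
  have he1 := congrArg (fun p => coeff p 1) hG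
  have he2 := congrArg (fun p => coeff p 2) hG
  have he3 := congrArg (fun p => coeff p 3) hG
  simp only [coeff_add, coeff_C_mul, coeff_C, coeff_X_pow, coeff_X, coeff_zero] at he0 he1 he2 he3
  norm_num at he0 he1 he2 he3
  exact scalar13 a b c d t (by linear_combination he1) (by linear_combination he2)
    (by linear_combination he3) (by linear_combination he0)

/-- `√2 ∈ K₅` (suitably scaled): the element `α³ - 2α² - 2α - 5` squares to `200`. -/
lemma sqrt2_in_K5 :
    (AdjoinRoot.mk f5 (X ^ 3 - 2 * X ^ 2 - 2 * X - 5)) ^ 2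
      = algebraMap ℚ (AdjoinRoot f5) 200 := by
  have halg : algebraMap ℚ (AdjoinRoot f5) (200 : ℚ) = AdjoinRoot.mk f5 (C 200) := rfl
  rw [halg, ← map_pow, ← sub_eq_zero, ← map_sub, AdjoinRoot.mk_eq_zero]
  refine ⟨X ^ 2 - 2 * X - 7, ?_⟩
  have : (C (200 : ℚ)) = 200 := by simp [map_ofNat]
  rw [this]; unfold f5; ring

/-- If a number field `K` admits a `ℚ`-algebra homomorphism into `ℚ[x]/(f₅)` and
also a `ℚ`-algebra homomorphism into `ℚ[x]/(f₁₃)`, then `K = ℚ`, i.e. `K` has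
dimension `1` over `ℚ`. -/
theorem common_subfield_is_Q (K : Type*) [Field K] [NumberField K]
    (φ : K →ₐ[ℚ] AdjoinRoot f5) (ψ : K →ₐ[ℚ] AdjoinRoot f13) :
    Module.finrank ℚ K = 1 := by
  have hA5 : Module.finrank ℚ (AdjoinRoot f5) = 4 := by
    rw [(AdjoinRoot.powerBasis' f5_monic).finrank]
    exact f5_natDegree
  letI : Algebra K (AdjoinRoot f5) := φ.toRingHom.toAlgebra
  haveI : IsScalarTower ℚ K (AdjoinRoot f5) :=
    IsScalarTower.of_algebraMap_eq fun x => (φ.commutes x).symm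
  have hdvd4 : Module.finrank ℚ K ∣ 4 :=
    ⟨Module.finrank K (AdjoinRoot f5),
      by rw [← hA5, ← Module.finrank_mul_finrank ℚ K (AdjoinRoot f5)]⟩
  have hpos : 0 < Module.finrank ℚ K := Module.finrank_pos
  -- the key consequence of the two embeddings: every rational square root in `K` is rational
  have key : ∀ (z : K) (u : ℚ), z ^ 2 = algebraMap ℚ K u →
      ∃ s : ℚ, z = algebraMap ℚ K s := by
    intro z u hz2
    have pm : ∀ s : ℚ, u = s ^ 2 → ∃ s' : ℚ, z = algebraMap ℚ K s' := by
      intro s hs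
      have hmul : (z - algebraMap ℚ K s) * (z + algebraMap ℚ K s) = 0 := by
        have h2 : z ^ 2 = (algebraMap ℚ K s) ^ 2 := by rw [hz2, hs, map_pow]
        linear_combination h2
      rcases mul_eq_zero.mp hmul with h | h
      · exact ⟨s, by linear_combination h⟩
      · exact ⟨-s, by rw [map_neg]; linear_combination h⟩
    have h5 : (φ z) ^ 2 = algebraMap ℚ (AdjoinRoot f5) u := by
      rw [← map_pow, hz2, AlgHom.commutes]
    have h13 : (ψ z) ^ 2 = algebraMap ℚ (AdjoinRoot f13) u := by
      rw [← map_pow, hz2, AlgHom.commutes]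
    rcases sq5 (φ z) u h5 with ⟨s, hs⟩ | ⟨s, hs⟩
    · exact pm s hs
    rcases sq13 (ψ z) u h13 with ⟨s', hs'⟩ | ⟨s', hs'⟩
    · exact pm s' hs'
    -- u = 2 s² = 13 s'²
    by_cases h0 : s = 0
    · refine ⟨0, ?_⟩
      have hz0 : z ^ 2 = 0 := by rw [hz2, hs, h0]; simp
      have := pow_eq_zero_iff (n := 2) two_ne_zero |>.mp hz0
      simp [this]
    · exfalso
      have hs'0 : s' ≠ 0 := by
        intro h'
        apply h0
        have h2 : s ^ 2 = 0 := by
          rw [h'] at hs'; nlinarith [hs, hs']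
        exact pow_eq_zero_iff (n := 2) two_ne_zero |>.mp h2
      exact sq_ne_26' hs'0 (show (2*s)^2 = 26*s'^2 by linear_combination (-2)*hs + 2*hs')
  obtain ⟨n, hn⟩ : ∃ n, Module.finrank ℚ K = n := ⟨_, rfl⟩
  rw [hn] at hdvd4 hpos
  have hle : n ≤ 4 := Nat.le_of_dvd (by norm_num) hdvd4
  interval_cases n
  · exact hn
  · -- degree 2 case
    exfalso
    have hy : ∃ y : K, y ∉ Set.range (algebraMap ℚ K) := by
      by_contra hcon
      push_neg at hcon
      have hbij : Function.Bijective (Algebra.linearMap ℚ K) :=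
        ⟨fun a b h => (algebraMap ℚ K).injective h, fun y => hcon y⟩
      have hfr := (LinearEquiv.ofBijective (Algebra.linearMap ℚ K) hbij).finrank_eq
      rw [Module.finrank_self, hn] at hfr
      norm_num at hfr
    obtain ⟨y, hy⟩ := hy
    have hint : IsIntegral ℚ y := IsIntegral.of_finite ℚ y
    have hmon := minpoly.monic hint
    have hle2 : (minpoly ℚ y).natDegree ≤ 2 := by
      have h := minpoly.natDegree_le (A := ℚ) y
      rwa [hn] at h
    have hdeg1 : (minpoly ℚ y).natDegree ≠ 1 := by
      intro h1
      apply hy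
      have hXC := hmon.eq_X_add_C h1
      have haev := minpoly.aeval ℚ y
      rw [hXC] at haev
      simp only [map_add, aeval_X, aeval_C] at haev
      exact ⟨-((minpoly ℚ y).coeff 0), by rw [map_neg]; linear_combination -haev⟩
    have hdeg2 : (minpoly ℚ y).natDegree = 2 := by
      have := minpoly.natDegree_pos hint
      omega
    have hc2 : (minpoly ℚ y).coeff 2 = 1 := by
      have := hmon.coeff_natDegree
      rwa [hdeg2] at this
    have hpp : minpoly ℚ y = X ^ 2 + C ((minpoly ℚ y).coeff 1) * X
        + C ((minpoly ℚ y).coeff 0) := by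
      conv_lhs => rw [(minpoly ℚ y).as_sum_range' 3 (by omega)]
      simp only [Finset.sum_range_succ, Finset.sum_range_zero, zero_add,
        ← C_mul_X_pow_eq_monomial, pow_zero, mul_one, pow_one, hc2, map_one, one_mul]
      ring
    have haev := minpoly.aeval ℚ y
    rw [hpp] at haev
    simp only [map_add, map_pow, map_mul, aeval_X, aeval_C] at haev
    obtain ⟨s, hzs⟩ := key (2*y + algebraMap ℚ K ((minpoly ℚ y).coeff 1))
        (((minpoly ℚ y).coeff 1)^2 - 4*((minpoly ℚ y).coeff 0)) (by
      rw [map_sub, map_pow, map_mul, map_ofNat]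
      linear_combination (4 : K) * haev)
    apply hy
    refine ⟨(s - (minpoly ℚ y).coeff 1)/2, ?_⟩
    rw [map_div₀, map_sub, map_ofNat]
    linear_combination -hzs/2
  · exfalso; norm_num at hdvd4
  · -- degree 4 case
    exfalso
    haveI : FiniteDimensional ℚ (AdjoinRoot f5) := (AdjoinRoot.powerBasis' f5_monic).finite
    haveI : Nontrivial (AdjoinRoot f5) :=
      Module.nontrivial_of_finrank_pos (R := ℚ) (by rw [hA5]; norm_num)
    have hinj : Function.Injective φ := φ.toRingHom.injective
    have hinj2 : Function.Injective φ.toLinearMap := hinj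
    have hrange : LinearMap.range φ.toLinearMap = ⊤ := by
      apply Submodule.eq_top_of_finrank_eq
      rw [LinearMap.finrank_range_of_inj hinj2, hn, hA5]
    obtain ⟨z, hz⟩ := LinearMap.range_eq_top.mp hrange
      (AdjoinRoot.mk f5 (X ^ 3 - 2 * X ^ 2 - 2 * X - 5))
    rw [AlgHom.toLinearMap_apply] at hz
    have hz2 : z ^ 2 = algebraMap ℚ K 200 := by
      apply hinj
      rw [map_pow, hz, sqrt2_in_K5, AlgHom.commutes]
    obtain ⟨s, hzs⟩ := key z 200 hz2
    have hs200 : s ^ 2 = 200 := by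
      have h' : algebraMap ℚ K (s ^ 2) = algebraMap ℚ K 200 := by
        rw [map_pow, ← hzs, hz2]
      exact (algebraMap ℚ K).injective h'
    exact sq_ne_two' (q := s) (r := 10) (by norm_num) (by rw [hs200]; norm_num)
end
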